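/- Let A be a left and right noetherian ring and G a group acting on A by ring automorphisms. Then every G-prime ideal J of A is semiprime: for every two-sided ideal I of A with I·I ⊆ J, one has I ⊆ J. -/
import Mathlib


open Pointwise

/-- A subset of a ring is a two-sided ideal: contains 0, closed under addition,
negation, and left/right multiplication by arbitrary ring elements. -/
def IsTwoSidedIdealSet {A : Type*} [Ring A] (I : Set A) : Prop :=
  (0 : A) ∈ I ∧ (∀ a ∈ I, ∀ b ∈ I, a + b ∈ I) ∧ (∀ a ∈ I, -a ∈ I) ∧
    (∀ a ∈ I, ∀ r : A, r * a ∈ I) ∧ (∀ a ∈ I, ∀ r : A, a * r ∈ I)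

/-- `MulSubset I J P` expresses that the product ideal `I·J` is contained in `P`
(for `P` closed under addition this is equivalent to the usual condition). -/
def MulSubset {A : Type*} [Ring A] (I J P : Set A) : Prop :=
  ∀ a ∈ I, ∀ b ∈ J, a * b ∈ P

/-- A two-sided ideal `P` is prime: proper, and `I₁I₂ ⊆ P` implies `I₁ ⊆ P` or `I₂ ⊆ P`
for all two-sided ideals `I₁, I₂`. -/
def IsPrimeIdealSet {A : Type*} [Ring A] (P : Set A) : Prop :=
  IsTwoSidedIdealSet P ∧ P ≠ Set.univ ∧
    ∀ I J : Set A, IsTwoSidedIdealSet I → IsTwoSidedIdealSet J →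
      MulSubset I J P → I ⊆ P ∨ J ⊆ P

/-- A two-sided ideal is `G`-stable if `g • I = I` for all `g ∈ G`. -/
def IsGStable (G : Type*) {A : Type*} [Group G] [Ring A] [MulSemiringAction G A]
    (I : Set A) : Prop :=
  ∀ g : G, g • I = I

/-- A `G`-prime ideal: a proper `G`-stable two-sided ideal `J` such that whenever
`I₁, I₂` are `G`-stable two-sided ideals with `I₁I₂ ⊆ J`, then `I₁ ⊆ J` or `I₂ ⊆ J`. -/
def IsGPrimeIdealSet (G : Type*) {A : Type*} [Group G] [Ring A] [MulSemiringAction G A]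
    (J : Set A) : Prop :=
  IsTwoSidedIdealSet J ∧ IsGStable G J ∧ J ≠ Set.univ ∧
    ∀ I₁ I₂ : Set A, IsTwoSidedIdealSet I₁ → IsGStable G I₁ →
      IsTwoSidedIdealSet I₂ → IsGStable G I₂ →
      MulSubset I₁ I₂ J → I₁ ⊆ J ∨ I₂ ⊆ J

namespace GPrimeAux

variable {A : Type*} [Ring A]

/-- An additive submonoid is left absorbing. -/
def LAbs (M : AddSubmonoid A) : Prop := ∀ a ∈ M, ∀ r : A, r * a ∈ M

/-- An additive submonoid is right absorbing. -/
def RAbs (M : AddSubmonoid A) : Prop := ∀ a ∈ M, ∀ r : A, a * r ∈ M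

lemma labs_mul {M N : AddSubmonoid A} (hM : LAbs M) : LAbs (M * N) := by
  intro a ha r
  refine AddSubmonoid.mul_induction_on (C := fun x => r * x ∈ M * N) ha
    (fun m hm n hn => ?_) (fun x y hx hy => ?_)
  · show r * (m * n) ∈ M * N
    rw [← mul_assoc]; exact AddSubmonoid.mul_mem_mul (hM m hm r) hn
  · show r * (x + y) ∈ M * N
    rw [mul_add]; exact add_mem hx hy

lemma rabs_mul {M N : AddSubmonoid A} (hN : RAbs N) : RAbs (M * N) := by
  intro a ha r
  refine AddSubmonoid.mul_induction_on (C := fun x => x * r ∈ M * N) ha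
    (fun m hm n hn => ?_) (fun x y hx hy => ?_)
  · show m * n * r ∈ M * N
    rw [mul_assoc]; exact AddSubmonoid.mul_mem_mul hm (hN n hn r)
  · show (x + y) * r ∈ M * N
    rw [add_mul]; exact add_mem hx hy

lemma labs_pow {M : AddSubmonoid A} (h : LAbs M) : ∀ k : ℕ, LAbs (M ^ (k + 1))
  | 0 => by rw [pow_one]; exact h
  | k + 1 => by rw [pow_succ]; exact labs_mul (labs_pow h k)

lemma rabs_pow {M : AddSubmonoid A} (h : RAbs M) : ∀ k : ℕ, RAbs (M ^ (k + 1))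
  | 0 => by rw [pow_one]; exact h
  | _ + 1 => by rw [pow_succ]; exact rabs_mul h

lemma labs_sup {M N : AddSubmonoid A} (hM : LAbs M) (hN : LAbs N) : LAbs (M ⊔ N) := by
  intro a ha r
  obtain ⟨x, hx, y, hy, rfl⟩ := AddSubmonoid.mem_sup.1 ha
  rw [mul_add]
  exact add_mem (le_sup_left (a := M) (hM x hx r)) (le_sup_right (a := M) (hN y hy r))

lemma rabs_sup {M N : AddSubmonoid A} (hM : RAbs M) (hN : RAbs N) : RAbs (M ⊔ N) := by
  intro a ha r
  obtain ⟨x, hx, y, hy, rfl⟩ := AddSubmonoid.mem_sup.1 ha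
  rw [add_mul]
  exact add_mem (le_sup_left (a := M) (hM x hx r)) (le_sup_right (a := M) (hN y hy r))

lemma mul_le_of_left {Jm M X : AddSubmonoid A} (hJ : RAbs Jm) (h : M ≤ Jm) : M * X ≤ Jm :=
  AddSubmonoid.mul_le.2 fun m hm x _ => hJ m (h hm) x

lemma mul_le_of_right {Jm M X : AddSubmonoid A} (hJ : LAbs Jm) (h : X ≤ Jm) : M * X ≤ Jm :=
  AddSubmonoid.mul_le.2 fun m _ x hx => hJ x (h hx) m

lemma pow_le_pow_left' {M N : AddSubmonoid A} (h : M ≤ N) : ∀ k : ℕ, M ^ k ≤ N ^ k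
  | 0 => le_rfl
  | k + 1 => by
      rw [pow_succ, pow_succ]
      exact AddSubmonoid.mul_le_mul (pow_le_pow_left' h k) h

/-- Key lemma: `(Q ⊔ J)^k ≤ Q^k ⊔ J` for a two-sided `J`. -/
lemma sup_pow_le {Jm : AddSubmonoid A} (hL : LAbs Jm) (hR : RAbs Jm) (Q : AddSubmonoid A) :
    ∀ k : ℕ, (Q ⊔ Jm) ^ k ≤ Q ^ k ⊔ Jm
  | 0 => by rw [pow_zero, pow_zero]; exact le_sup_left
  | k + 1 => by
      rw [pow_succ]
      calc (Q ⊔ Jm) ^ k * (Q ⊔ Jm) ≤ (Q ^ k ⊔ Jm) * (Q ⊔ Jm) :=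
            AddSubmonoid.mul_le_mul (sup_pow_le hL hR Q k) le_rfl
        _ = Q ^ k * (Q ⊔ Jm) ⊔ Jm * (Q ⊔ Jm) := AddSubmonoid.sup_mul
        _ ≤ (Q ^ k * Q ⊔ Q ^ k * Jm) ⊔ Jm :=
            sup_le ((le_of_eq AddSubmonoid.mul_sup).trans le_sup_left)
              ((mul_le_of_left hR le_rfl).trans le_sup_right)
        _ ≤ Q ^ (k + 1) ⊔ Jm := by
            rw [pow_succ]
            exact sup_le (sup_le le_sup_left ((mul_le_of_right hL le_rfl).trans le_sup_right))
              le_sup_right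

/-- Sum of two ideals nilpotent mod a two-sided `J` is nilpotent mod `J`. -/
lemma sum_nilpotent : ∀ m : ℕ, 1 ≤ m → ∀ (Jm P Q : AddSubmonoid A), LAbs Jm → RAbs Jm →
    LAbs P → RAbs P → P ^ m ≤ Jm → ∀ n : ℕ, 1 ≤ n → Q ^ n ≤ Jm →
    ∃ k : ℕ, 1 ≤ k ∧ (P ⊔ Q) ^ k ≤ Jm := by
  intro m hm
  induction m, hm using Nat.le_induction with
  | base =>
      intro Jm P Q hL hR _ _ hP n hn hQ
      refine ⟨n, hn, ?_⟩
      rw [pow_one] at hP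
      calc (P ⊔ Q) ^ n ≤ (Q ⊔ Jm) ^ n := by
            refine pow_le_pow_left' (sup_le (hP.trans le_sup_right) le_sup_left) n
        _ ≤ Q ^ n ⊔ Jm := sup_pow_le hL hR Q n
        _ ≤ Jm := sup_le hQ le_rfl
  | succ m hm ih =>
      intro Jm P Q hL hR hPL hPR hP n hn hQ
      obtain ⟨m', rfl⟩ : ∃ m', m = m' + 1 := ⟨m - 1, by omega⟩
      have hPmL : LAbs (P ^ (m' + 1)) := labs_pow hPL m'
      have hPmR : RAbs (P ^ (m' + 1)) := rabs_pow hPR m'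
      obtain ⟨k, hk, hPQ⟩ := ih (P ^ (m' + 1) ⊔ Jm) P Q (labs_sup hPmL hL) (rabs_sup hPmR hR)
        hPL hPR le_sup_left n hn (hQ.trans le_sup_right)
      refine ⟨k * 2, by omega, ?_⟩
      have h2m : P ^ ((m' + 1) * 2) ≤ Jm := by
        have : (m' + 1) * 2 = (m' + 1 + 1) + m' := by omega
        rw [this, pow_add]
        exact mul_le_of_left hR hP
      calc (P ⊔ Q) ^ (k * 2) = ((P ⊔ Q) ^ k) ^ 2 := pow_mul _ k 2
        _ ≤ (P ^ (m' + 1) ⊔ Jm) ^ 2 := pow_le_pow_left' hPQ 2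
        _ ≤ (P ^ (m' + 1)) ^ 2 ⊔ Jm := sup_pow_le hL hR _ 2
        _ ≤ Jm := by rw [← pow_mul]; exact sup_le h2m le_rfl

lemma map_mul' (f : A →+* A) (M N : AddSubmonoid A) :
    AddSubmonoid.map f (M * N) = AddSubmonoid.map f M * AddSubmonoid.map f N := by
  refine le_antisymm ?_ ?_
  · rw [AddSubmonoid.map_le_iff_le_comap]
    refine AddSubmonoid.mul_le.2 fun m hm n hn => ?_
    simp only [AddSubmonoid.mem_comap, map_mul]
    exact AddSubmonoid.mul_mem_mul ⟨m, hm, rfl⟩ ⟨n, hn, rfl⟩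
  · refine AddSubmonoid.mul_le.2 ?_
    rintro _ ⟨m, hm, rfl⟩ _ ⟨n, hn, rfl⟩
    exact ⟨m * n, AddSubmonoid.mul_mem_mul hm hn, map_mul f m n⟩

lemma map_pow' (f : A →+* A) (M : AddSubmonoid A) :
    ∀ k : ℕ, AddSubmonoid.map f (M ^ (k + 1)) = (AddSubmonoid.map f M) ^ (k + 1)
  | 0 => by rw [pow_one, pow_one]
  | k + 1 => by rw [pow_succ, map_mul', map_pow' f M k, ← pow_succ]

end GPrimeAux

/-- Let `A` be a left and right noetherian ring and `G` a group acting on `A` by ring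
automorphisms. Every `G`-prime ideal `J` of `A` is semiprime: any two-sided ideal `I`
with `I·I ⊆ J` satisfies `I ⊆ J`. -/
theorem gPrime_is_semiprime {G A : Type*} [Group G] [Ring A]
    [MulSemiringAction G A] [IsNoetherianRing A] [IsNoetherianRing Aᵐᵒᵖ]
    (J : Set A) (hJ : IsGPrimeIdealSet G J) :
    ∀ I : Set A, IsTwoSidedIdealSet I → MulSubset I I J → I ⊆ J := by
  obtain ⟨⟨hJ0, hJadd, hJneg, hJl, hJr⟩, hJG, hJne, hJprime⟩ := hJ
  -- `J` as an additive submonoid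
  set Jm : AddSubmonoid A :=
    { carrier := J, zero_mem' := hJ0, add_mem' := fun ha hb => hJadd _ ha _ hb } with hJmdef
  have hJmL : GPrimeAux.LAbs Jm := fun a ha r => hJl a ha r
  have hJmR : GPrimeAux.RAbs Jm := fun a ha r => hJr a ha r
  -- the action as ring homomorphisms
  set σ : G → A →+* A := fun g => MulSemiringAction.toRingHom G A g with hσdef
  have himg : ∀ (g : G) (T : Set A), g • T = ⇑(σ g) '' T := fun g T => rfl
  have himJ : ∀ g : G, AddSubmonoid.map (σ g) Jm = Jm := by
    intro g
    apply SetLike.ext'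
    rw [AddSubmonoid.coe_map]
    show ⇑(σ g) '' J = J
    rw [← himg g J]
    exact hJG g
  -- the family of two-sided ideals nilpotent mod `J`
  set S : Set (Ideal A) := {I' : Ideal A |
    (∀ a ∈ I', ∀ r : A, a * r ∈ I') ∧ ∃ k : ℕ, 1 ≤ k ∧ I'.toAddSubmonoid ^ k ≤ Jm} with hSdef
  have hbot : (⊥ : Ideal A) ∈ S := by
    refine ⟨fun a ha r => ?_, 1, le_refl 1, ?_⟩
    · rw [Submodule.mem_bot] at ha ⊢
      rw [ha, zero_mul]
    · rw [pow_one]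
      intro x hx
      have hx0 : x = 0 := by simpa using hx
      rw [hx0]; exact Jm.zero_mem
  obtain ⟨N, hNS, hNmax⟩ :=
    (wellFounded_gt (α := Ideal A)).has_min S ⟨⊥, hbot⟩
  have hNRab : ∀ a ∈ N, ∀ r : A, a * r ∈ N := hNS.1
  have hNL : GPrimeAux.LAbs N.toAddSubmonoid := fun a ha r => by
    simpa [smul_eq_mul] using N.smul_mem r ha
  have hNR : GPrimeAux.RAbs N.toAddSubmonoid := fun a ha r => hNRab a ha r
  -- every member of S is contained in N
  have hle : ∀ I' ∈ S, I' ≤ N := by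
    intro I' hI'
    obtain ⟨hIR, k, hk, hIk⟩ := hI'
    obtain ⟨-, k', hk', hNk⟩ := id hNS
    have hsup : N ⊔ I' ∈ S := by
      constructor
      · intro a ha r
        obtain ⟨x, hx, y, hy, rfl⟩ := Submodule.mem_sup.1 ha
        rw [add_mul]
        exact Submodule.mem_sup.2 ⟨x * r, hNRab x hx r, y * r, hIR y hy r, rfl⟩
      · obtain ⟨kk, hkk, hkle⟩ := GPrimeAux.sum_nilpotent k' hk' Jm N.toAddSubmonoid
          I'.toAddSubmonoid hJmL hJmR hNL hNR hNk k hk hIk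
        refine ⟨kk, hkk, ?_⟩
        rw [Submodule.sup_toAddSubmonoid]
        exact hkle
    have hnot := hNmax _ hsup
    have heq : N = N ⊔ I' := ((le_sup_left : N ≤ N ⊔ I').lt_or_eq).resolve_left hnot
    exact le_sup_right.trans heq.ge
  -- N is G-stable
  have hmapN : ∀ g : G, AddSubmonoid.map (σ g) N.toAddSubmonoid ≤ N.toAddSubmonoid := by
    intro g
    set Ng : Ideal A :=
      { carrier := AddSubmonoid.map (σ g) N.toAddSubmonoid,
        zero_mem' := zero_mem _,
        add_mem' := fun ha hb => add_mem ha hb,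
        smul_mem' := by
          intro r x hx
          obtain ⟨a, ha, rfl⟩ := AddSubmonoid.mem_map.1 hx
          refine AddSubmonoid.mem_map.2 ⟨(g⁻¹ • r) * a, N.smul_mem _ ha, ?_⟩
          rw [map_mul]
          show g • (g⁻¹ • r) * σ g a = r • σ g a
          rw [smul_inv_smul, smul_eq_mul] } with hNgdef
    have hNgS : Ng ∈ S := by
      constructor
      · intro x hx r
        obtain ⟨a, ha, rfl⟩ := AddSubmonoid.mem_map.1 hx
        refine AddSubmonoid.mem_map.2 ⟨a * (g⁻¹ • r), hNRab a ha _, ?_⟩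
        show g • (a * (g⁻¹ • r)) = σ g a * r
        rw [smul_mul', smul_inv_smul]
        rfl
      · obtain ⟨-, k, hk, hNk⟩ := id hNS
        obtain ⟨k', rfl⟩ : ∃ k', k = k' + 1 := ⟨k - 1, by omega⟩
        refine ⟨k' + 1, by omega, ?_⟩
        have hcarr : Ng.toAddSubmonoid = AddSubmonoid.map (σ g) N.toAddSubmonoid := rfl
        rw [hcarr, ← GPrimeAux.map_pow']
        calc AddSubmonoid.map (σ g) (N.toAddSubmonoid ^ (k' + 1))
            ≤ AddSubmonoid.map (σ g) Jm := by
              intro y hy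
              obtain ⟨x, hx, rfl⟩ := AddSubmonoid.mem_map.1 hy
              exact AddSubmonoid.mem_map.2 ⟨x, hNk hx, rfl⟩
          _ = Jm := himJ g
    exact fun x hx => hle Ng hNgS hx
  have hmapNeq : ∀ g : G, AddSubmonoid.map (σ g) N.toAddSubmonoid = N.toAddSubmonoid := by
    intro g
    refine le_antisymm (hmapN g) (fun x hx => AddSubmonoid.mem_map.2 ⟨g⁻¹ • x, ?_, ?_⟩)
    · exact hmapN g⁻¹ (AddSubmonoid.mem_map.2 ⟨x, hx, rfl⟩)
    · show g • (g⁻¹ • x) = x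
      exact smul_inv_smul g x
  have hNsetG : IsGStable G (N : Set A) := by
    intro g
    rw [himg g]
    calc ⇑(σ g) '' (N : Set A)
        = (AddSubmonoid.map (σ g) N.toAddSubmonoid : Set A) := (AddSubmonoid.coe_map _ _).symm
      _ = (N : Set A) := by rw [hmapNeq g]; exact N.coe_toAddSubmonoid
  -- descent using G-primeness
  have key : ∀ k : ℕ, N.toAddSubmonoid ^ k ≤ Jm → (N : Set A) ⊆ J := by
    intro k
    induction k with
    | zero =>
        intro h
        exfalso
        apply hJne
        have h1 : (1 : A) ∈ J := h (by rw [pow_zero]; exact ⟨1, Nat.cast_one⟩)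
        refine Set.eq_univ_iff_forall.2 fun x => ?_
        simpa [mul_one] using hJl 1 h1 x
    | succ k ih =>
        intro h
        rcases Nat.eq_zero_or_pos k with rfl | hk
        · rw [pow_one] at h
          exact fun x hx => h hx
        obtain ⟨k', rfl⟩ : ∃ k', k = k' + 1 := ⟨k - 1, by omega⟩
        have hKL := GPrimeAux.labs_pow hNL k'
        have hKR := GPrimeAux.rabs_pow hNR k'
        have hKts : IsTwoSidedIdealSet ((N.toAddSubmonoid ^ (k' + 1) : AddSubmonoid A) : Set A) :=
          ⟨zero_mem _, fun a ha b hb => add_mem ha hb,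
            fun a ha => by simpa [neg_one_mul] using hKL a ha (-1),
            fun a ha r => hKL a ha r, fun a ha r => hKR a ha r⟩
        have hKG : IsGStable G ((N.toAddSubmonoid ^ (k' + 1) : AddSubmonoid A) : Set A) := by
          intro g
          have hmk := GPrimeAux.map_pow' (σ g) N.toAddSubmonoid k'
          rw [hmapNeq g] at hmk
          rw [himg g]
          calc ⇑(σ g) '' ((N.toAddSubmonoid ^ (k' + 1) : AddSubmonoid A) : Set A)
              = (AddSubmonoid.map (σ g) (N.toAddSubmonoid ^ (k' + 1)) : Set A) :=
                (AddSubmonoid.coe_map _ _).symm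
            _ = _ := by rw [hmk]
        have hNts : IsTwoSidedIdealSet (N : Set A) :=
          ⟨N.zero_mem, fun a ha b hb => N.add_mem ha hb, fun a ha => N.neg_mem ha,
            fun a ha r => hNL a ha r, fun a ha r => hNRab a ha r⟩
        have hmul : MulSubset (N : Set A)
            ((N.toAddSubmonoid ^ (k' + 1) : AddSubmonoid A) : Set A) J := by
          intro a ha b hb
          have hab : a * b ∈ N.toAddSubmonoid ^ (k' + 1 + 1) := by
            rw [pow_succ']
            exact AddSubmonoid.mul_mem_mul ha hb
          exact h hab
        rcases hJprime (N : Set A) _ hNts hNsetG hKts hKG hmul with hcase | hcase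
        · exact hcase
        · exact ih fun x hx => hcase hx
  -- conclusion
  intro I hI hII
  obtain ⟨hI0, hIadd, hIneg, hIl, hIr⟩ := hI
  set I' : Ideal A :=
    { carrier := I, zero_mem' := hI0, add_mem' := fun ha hb => hIadd _ ha _ hb,
      smul_mem' := fun r a ha => hIl a ha r } with hI'def
  have hI'S : I' ∈ S := by
    refine ⟨fun a ha r => hIr a ha r, 2, by omega, ?_⟩
    rw [pow_two]
    exact AddSubmonoid.mul_le.2 fun a ha b hb => hII a ha b hb
  obtain ⟨-, k, hk, hNk⟩ := id hNS
  exact fun x hx => key k hNk (hle I' hI'S hx)
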